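/- arXiv:1104.4468 — 7 statements merged into one kernel-verified Lean document; each statement's English description precedes it below -/
import Mathlib

section
/- For matrices A and B of the same dimensions, the operator norm of the Hadamard (entrywise) product A ∘ B is at most γ₂(A) times the operator norm of B, where γ₂(A) is the factorization norm of A. -/
open Matrix
open scoped ComplexOrder

/-- Operator (spectral) norm of a matrix, viewed as a linear map between
Euclidean spaces. -/
noncomputable def opNorm {m n : Type*} [Fintype m] [Fintype n] [DecidableEq n]
    (A : Matrix m n ℂ) : ℝ :=
  ‖LinearMap.toContinuousLinearMap (Matrix.toEuclideanLin A)‖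

/-- The factorization norm γ₂ of a matrix: the infimum over all factorizations
`A x y = ⟨u x, v y⟩` of `max (sup_x ‖u x‖²) (sup_y ‖v y‖²)`. -/
noncomputable def gamma2 {m n : Type*} [Fintype m] [Fintype n]
    (A : Matrix m n ℂ) : ℝ :=
  sInf { c : ℝ | ∃ (d : ℕ) (u : m → EuclideanSpace ℂ (Fin d)) (v : n → EuclideanSpace ℂ (Fin d)),
    (∀ x y, A x y = inner ℂ (u x) (v y)) ∧
    c = max (⨆ x, ‖u x‖ ^ 2) (⨆ y, ‖v y‖ ^ 2) }

open scoped InnerProductSpace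

lemma inner_toEuclideanLin {m n : Type*} [Fintype m] [Fintype n] [DecidableEq n]
    (M : Matrix m n ℂ) (ψ : EuclideanSpace ℂ m) (φ : EuclideanSpace ℂ n) :
    ⟪ψ, (Matrix.toEuclideanLin M) φ⟫_ℂ
      = ∑ x, ∑ y, (starRingEnd ℂ) (ψ x) * (M x y * φ y) := by
  rw [PiLp.inner_apply]
  refine Finset.sum_congr rfl fun x _ => ?_
  rw [Matrix.toEuclideanLin_apply]
  simp [Matrix.mulVec, dotProduct, Finset.mul_sum, RCLike.inner_apply]
  rw [mul_comm, Finset.mul_sum]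

lemma mulVec_norm_le {m n : Type*} [Fintype m] [Fintype n] [DecidableEq n]
    (B : Matrix m n ℂ) (φ : EuclideanSpace ℂ n) :
    ‖(Matrix.toEuclideanLin B) φ‖ ≤ opNorm B * ‖φ‖ :=
  (LinearMap.toContinuousLinearMap (Matrix.toEuclideanLin B)).le_opNorm φ

lemma key_bound {m n : Type*} [Fintype m] [Fintype n] [DecidableEq n]
    (A B : Matrix m n ℂ) {d : ℕ} (u : m → EuclideanSpace ℂ (Fin d))
    (v : n → EuclideanSpace ℂ (Fin d))
    (hA : ∀ x y, A x y = ⟪u x, v y⟫_ℂ) :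
    opNorm (A ⊙ B) ≤ max (⨆ x, ‖u x‖ ^ 2) (⨆ y, ‖v y‖ ^ 2) * opNorm B := by
  set cu := ⨆ x, ‖u x‖ ^ 2 with hcu
  set cv := ⨆ y, ‖v y‖ ^ 2 with hcv
  have hcu0 : 0 ≤ cu := Real.iSup_nonneg fun x => sq_nonneg _
  have hcv0 : 0 ≤ cv := Real.iSup_nonneg fun y => sq_nonneg _
  have hB0 : 0 ≤ opNorm B := norm_nonneg _
  have hmax0 : 0 ≤ max cu cv := le_trans hcu0 (le_max_left _ _)
  have key : ∀ (ψ : EuclideanSpace ℂ m) (φ : EuclideanSpace ℂ n),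
      ‖⟪ψ, (Matrix.toEuclideanLin (A ⊙ B)) φ⟫_ℂ‖
        ≤ (max cu cv * opNorm B) * (‖ψ‖ * ‖φ‖) := by
    intro ψ φ
    set ψ' : Fin d → EuclideanSpace ℂ m :=
      fun i => (WithLp.equiv 2 (m → ℂ)).symm (fun x => ψ x * u x i) with hψ'
    set φ' : Fin d → EuclideanSpace ℂ n :=
      fun i => (WithLp.equiv 2 (n → ℂ)).symm (fun y => v y i * φ y) with hφ'
    have hsplit : ⟪ψ, (Matrix.toEuclideanLin (A ⊙ B)) φ⟫_ℂ
        = ∑ i, ⟪ψ' i, (Matrix.toEuclideanLin B) (φ' i)⟫_ℂ := by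
      rw [inner_toEuclideanLin]
      calc ∑ x, ∑ y, (starRingEnd ℂ) (ψ x) * ((A ⊙ B) x y * φ y)
          = ∑ x, ∑ y, ∑ i, (starRingEnd ℂ) (ψ x * u x i) * (B x y * (v y i * φ y)) := by
            refine Finset.sum_congr rfl fun x _ => Finset.sum_congr rfl fun y _ => ?_
            rw [Matrix.hadamard_apply, hA, PiLp.inner_apply]
            simp only [RCLike.inner_apply, _root_.map_mul, Finset.sum_mul, Finset.mul_sum]
            exact Finset.sum_congr rfl fun i _ => by ring
        _ = ∑ x, ∑ i, ∑ y, (starRingEnd ℂ) (ψ x * u x i) * (B x y * (v y i * φ y)) :=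
            Finset.sum_congr rfl fun x _ => Finset.sum_comm
        _ = ∑ i, ∑ x, ∑ y, (starRingEnd ℂ) (ψ x * u x i) * (B x y * (v y i * φ y)) :=
            Finset.sum_comm
        _ = ∑ i, ⟪ψ' i, (Matrix.toEuclideanLin B) (φ' i)⟫_ℂ := by
            refine Finset.sum_congr rfl fun i _ => ?_
            rw [inner_toEuclideanLin]
            rfl
    have hψsum : ∑ i, ‖ψ' i‖ ^ 2 ≤ cu * ‖ψ‖ ^ 2 := by
      have : ∀ i, ‖ψ' i‖ ^ 2 = ∑ x, ‖ψ x‖ ^ 2 * ‖u x i‖ ^ 2 := fun i => by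
        rw [PiLp.norm_sq_eq_of_L2]
        exact Finset.sum_congr rfl fun x _ => by
          simp [hψ', norm_mul, mul_pow]
      rw [Finset.sum_congr rfl fun i _ => this i, Finset.sum_comm]
      calc ∑ x, ∑ i, ‖ψ x‖ ^ 2 * ‖u x i‖ ^ 2
          = ∑ x, ‖ψ x‖ ^ 2 * ‖u x‖ ^ 2 := by
            refine Finset.sum_congr rfl fun x _ => ?_
            rw [← Finset.mul_sum, PiLp.norm_sq_eq_of_L2]
        _ ≤ ∑ x, ‖ψ x‖ ^ 2 * cu := by
            refine Finset.sum_le_sum fun x _ => ?_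
            have : ‖u x‖ ^ 2 ≤ cu :=
              le_ciSup (f := fun x => ‖u x‖ ^ 2) (Set.Finite.bddAbove (Set.finite_range _)) x
            exact mul_le_mul_of_nonneg_left this (sq_nonneg _)
        _ = cu * ‖ψ‖ ^ 2 := by
            rw [← Finset.sum_mul, mul_comm, PiLp.norm_sq_eq_of_L2]
    have hφsum : ∑ i, ‖φ' i‖ ^ 2 ≤ cv * ‖φ‖ ^ 2 := by
      have : ∀ i, ‖φ' i‖ ^ 2 = ∑ y, ‖φ y‖ ^ 2 * ‖v y i‖ ^ 2 := fun i => by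
        rw [PiLp.norm_sq_eq_of_L2]
        exact Finset.sum_congr rfl fun y _ => by
          simp [hφ', norm_mul, mul_pow]; ring
      rw [Finset.sum_congr rfl fun i _ => this i, Finset.sum_comm]
      calc ∑ y, ∑ i, ‖φ y‖ ^ 2 * ‖v y i‖ ^ 2
          = ∑ y, ‖φ y‖ ^ 2 * ‖v y‖ ^ 2 := by
            refine Finset.sum_congr rfl fun y _ => ?_
            rw [← Finset.mul_sum, PiLp.norm_sq_eq_of_L2]
        _ ≤ ∑ y, ‖φ y‖ ^ 2 * cv := by
            refine Finset.sum_le_sum fun y _ => ?_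
            have : ‖v y‖ ^ 2 ≤ cv :=
              le_ciSup (f := fun y => ‖v y‖ ^ 2) (Set.Finite.bddAbove (Set.finite_range _)) y
            exact mul_le_mul_of_nonneg_left this (sq_nonneg _)
        _ = cv * ‖φ‖ ^ 2 := by
            rw [← Finset.sum_mul, mul_comm, PiLp.norm_sq_eq_of_L2]
    calc ‖⟪ψ, (Matrix.toEuclideanLin (A ⊙ B)) φ⟫_ℂ‖
        = ‖∑ i, ⟪ψ' i, (Matrix.toEuclideanLin B) (φ' i)⟫_ℂ‖ := by rw [hsplit]
      _ ≤ ∑ i, ‖⟪ψ' i, (Matrix.toEuclideanLin B) (φ' i)⟫_ℂ‖ := norm_sum_le _ _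
      _ ≤ ∑ i, ‖ψ' i‖ * (opNorm B * ‖φ' i‖) := by
          refine Finset.sum_le_sum fun i _ => ?_
          exact (norm_inner_le_norm _ _).trans
            (mul_le_mul_of_nonneg_left (mulVec_norm_le B _) (norm_nonneg _))
      _ = opNorm B * ∑ i, ‖ψ' i‖ * ‖φ' i‖ := by
          rw [Finset.mul_sum]; exact Finset.sum_congr rfl fun i _ => by ring
      _ ≤ opNorm B * (Real.sqrt (∑ i, ‖ψ' i‖ ^ 2) * Real.sqrt (∑ i, ‖φ' i‖ ^ 2)) := by
          refine mul_le_mul_of_nonneg_left ?_ hB0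
          exact Real.sum_mul_le_sqrt_mul_sqrt _ _ _
      _ ≤ opNorm B * (Real.sqrt (cu * ‖ψ‖ ^ 2) * Real.sqrt (cv * ‖φ‖ ^ 2)) := by
          refine mul_le_mul_of_nonneg_left ?_ hB0
          exact mul_le_mul (Real.sqrt_le_sqrt hψsum) (Real.sqrt_le_sqrt hφsum)
            (Real.sqrt_nonneg _) (Real.sqrt_nonneg _)
      _ = opNorm B * ((Real.sqrt cu * Real.sqrt cv) * (‖ψ‖ * ‖φ‖)) := by
          rw [Real.sqrt_mul hcu0, Real.sqrt_mul hcv0, Real.sqrt_sq (norm_nonneg _),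
            Real.sqrt_sq (norm_nonneg _)]
          ring
      _ ≤ opNorm B * (max cu cv * (‖ψ‖ * ‖φ‖)) := by
          refine mul_le_mul_of_nonneg_left (mul_le_mul_of_nonneg_right ?_
            (mul_nonneg (norm_nonneg _) (norm_nonneg _))) hB0
          calc Real.sqrt cu * Real.sqrt cv
              = Real.sqrt (cu * cv) := (Real.sqrt_mul hcu0 _).symm
            _ ≤ Real.sqrt (max cu cv * max cu cv) := Real.sqrt_le_sqrt
                (mul_le_mul (le_max_left _ _) (le_max_right _ _) hcv0 hmax0)
            _ = max cu cv := Real.sqrt_mul_self hmax0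
      _ = (max cu cv * opNorm B) * (‖ψ‖ * ‖φ‖) := by ring
  refine ContinuousLinearMap.opNorm_le_bound _ (mul_nonneg hmax0 hB0) fun φ => ?_
  set a := (LinearMap.toContinuousLinearMap (Matrix.toEuclideanLin (A ⊙ B))) φ with ha
  have haa : (LinearMap.toContinuousLinearMap (Matrix.toEuclideanLin (A ⊙ B))) φ
      = (Matrix.toEuclideanLin (A ⊙ B)) φ := rfl
  have h := key a φ
  rw [ha, haa] at h
  have hnorm : ‖⟪(Matrix.toEuclideanLin (A ⊙ B)) φ, (Matrix.toEuclideanLin (A ⊙ B)) φ⟫_ℂ‖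
      = ‖(Matrix.toEuclideanLin (A ⊙ B)) φ‖ ^ 2 := by
    rw [inner_self_eq_norm_sq_to_K]
    simp [norm_pow]
  rw [hnorm] at h
  have ha0 : (0:ℝ) ≤ ‖(Matrix.toEuclideanLin (A ⊙ B)) φ‖ := norm_nonneg _
  have hφ0 : (0:ℝ) ≤ ‖φ‖ := norm_nonneg _
  show ‖(Matrix.toEuclideanLin (A ⊙ B)) φ‖ ≤ max cu cv * opNorm B * ‖φ‖
  nlinarith [mul_nonneg (mul_nonneg hmax0 hB0) hφ0]

theorem opNorm_hadamard_le {m n : Type*} [Fintype m] [Fintype n] [DecidableEq n]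
    (A B : Matrix m n ℂ) :
    opNorm (A ⊙ B) ≤ gamma2 A * opNorm B := by
  classical
  set S := { c : ℝ | ∃ (d : ℕ) (u : m → EuclideanSpace ℂ (Fin d))
      (v : n → EuclideanSpace ℂ (Fin d)),
    (∀ x y, A x y = inner ℂ (u x) (v y)) ∧
    c = max (⨆ x, ‖u x‖ ^ 2) (⨆ y, ‖v y‖ ^ 2) } with hS
  have hmem : ∀ c ∈ S, opNorm (A ⊙ B) ≤ c * opNorm B := by
    rintro c ⟨d, u, v, hA, rfl⟩
    exact key_bound A B u v hA
  have hne : S.Nonempty := by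
    refine ⟨_, Fintype.card n, fun x => (WithLp.equiv 2 (Fin (Fintype.card n) → ℂ)).symm
      (fun i => (starRingEnd ℂ) (A x ((Fintype.equivFin n).symm i))),
      fun y => EuclideanSpace.single (Fintype.equivFin n y) 1, fun x y => ?_, rfl⟩
    rw [EuclideanSpace.inner_single_right]
    simp
  have hB0 : 0 ≤ opNorm B := norm_nonneg _
  rcases hB0.eq_or_lt with hB | hB
  · obtain ⟨c, hc⟩ := hne
    have := hmem c hc
    rw [← hB] at this ⊢
    simpa using this
  · have hg : gamma2 A = sInf S := rfl
    rw [hg, ← div_le_iff₀ hB]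
    exact le_csInf hne fun c hc => (div_le_iff₀ hB).2 (hmem c hc)
end

section
/- Let p and q be probability distributions for a discrete random variable A taking finitely many strictly positive real values. If the fidelity F(p,q) = Σ_i √(p_i q_i) is at least √δ for some δ ∈ [0,1], then the expectation of A under q satisfies E_q[A] ≥ δ · (E_p[A⁻¹])⁻¹. -/
/-- Fidelity–expectation bound: if the classical fidelity between `p` and `q`
is at least `√δ`, then `E_q[A] ≥ δ / E_p[A⁻¹]`. -/
theorem expectation_fidelity {ι : Type*} [Fintype ι] (a : ι → ℝ) (ha : ∀ i, 0 < a i)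
    (p q : ι → ℝ) (hp0 : ∀ i, 0 ≤ p i) (hq0 : ∀ i, 0 ≤ q i)
    (hp1 : ∑ i, p i = 1) (hq1 : ∑ i, q i = 1)
    (δ : ℝ) (hδ0 : 0 ≤ δ) (hδ1 : δ ≤ 1)
    (hF : Real.sqrt δ ≤ ∑ i, Real.sqrt (p i * q i)) :
    δ * (∑ i, p i / a i)⁻¹ ≤ ∑ i, q i * a i := by
  set S := ∑ i, p i / a i with hS
  have hSpos : 0 < S := by
    by_contra h
    push_neg at h
    have hS0 : S = 0 := le_antisymm h (Finset.sum_nonneg fun i _ =>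
      div_nonneg (hp0 i) (ha i).le)
    have hall : ∀ i ∈ Finset.univ, p i / a i = 0 :=
      (Finset.sum_eq_zero_iff_of_nonneg fun i _ =>
        div_nonneg (hp0 i) (ha i).le).mp hS0
    have : ∑ i, p i = 0 := Finset.sum_eq_zero fun i _ => by
      have := hall i (Finset.mem_univ i)
      have := (div_eq_zero_iff.mp this).resolve_right (ha i).ne'
      exact this
    simp [this] at hp1
  have hCS : (∑ i, Real.sqrt (p i / a i) * Real.sqrt (q i * a i)) ^ 2 ≤
      (∑ i, Real.sqrt (p i / a i) ^ 2) * ∑ i, Real.sqrt (q i * a i) ^ 2 :=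
    Finset.sum_mul_sq_le_sq_mul_sq Finset.univ _ _
  have heq : ∀ i, Real.sqrt (p i / a i) * Real.sqrt (q i * a i) =
      Real.sqrt (p i * q i) := by
    intro i
    rw [← Real.sqrt_mul (div_nonneg (hp0 i) (ha i).le)]
    have hz := (ha i).ne'
    congr 1
    field_simp
  have hδle : δ ≤ S * ∑ i, q i * a i := by
    calc δ = Real.sqrt δ ^ 2 := (Real.sq_sqrt hδ0).symm
    _ ≤ (∑ i, Real.sqrt (p i * q i)) ^ 2 := by
        apply pow_le_pow_left₀ (Real.sqrt_nonneg _) hF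
    _ = (∑ i, Real.sqrt (p i / a i) * Real.sqrt (q i * a i)) ^ 2 := by
        simp_rw [heq]
    _ ≤ (∑ i, Real.sqrt (p i / a i) ^ 2) * ∑ i, Real.sqrt (q i * a i) ^ 2 := hCS
    _ = S * ∑ i, q i * a i := by
        congr 1
        · exact Finset.sum_congr rfl fun i _ =>
            Real.sq_sqrt (div_nonneg (hp0 i) (ha i).le)
        · exact Finset.sum_congr rfl fun i _ =>
            Real.sq_sqrt (mul_nonneg (hq0 i) (ha i).le)
  rw [mul_inv_le_iff₀ hSpos]
  linarith [hδle]
end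

section
/- Let 0 < a₀ ≤ ā ≤ a₁ and let A be a random variable with distribution p taking values in a finite set S ⊆ [a₀, a₁]. If E_p[A] = ā, then E_p[A⁻¹] ≤ (a₀ + a₁ − ā)/(a₀ a₁). -/
/-- If a random variable takes values in `[a₀, a₁]` with mean `ā`, then the mean of
its inverse is at most `(a₀ + a₁ − ā)/(a₀ a₁)`. -/
theorem expectation_inv_le {ι : Type*} [Fintype ι] (a : ι → ℝ) (p : ι → ℝ)
    (a₀ a₁ abar : ℝ) (h0 : 0 < a₀) (h01 : a₀ ≤ abar) (h1 : abar ≤ a₁)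
    (hrange : ∀ i, a i ∈ Set.Icc a₀ a₁)
    (hp0 : ∀ i, 0 ≤ p i) (hp1 : ∑ i, p i = 1)
    (hmean : ∑ i, p i * a i = abar) :
    ∑ i, p i / a i ≤ (a₀ + a₁ - abar) / (a₀ * a₁) := by
  have h01pos : 0 < a₀ * a₁ := mul_pos h0 (h0.trans_le (h01.trans h1))
  have key : ∀ i, p i / a i ≤ p i * (a₀ + a₁ - a i) / (a₀ * a₁) := by
    intro i
    obtain ⟨hlo, hhi⟩ := hrange i
    have hai : 0 < a i := h0.trans_le hlo
    have hprod : 0 ≤ (a i - a₀) * (a₁ - a i) :=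
      mul_nonneg (by linarith) (by linarith)
    have hineq : a₀ * a₁ ≤ a i * (a₀ + a₁ - a i) := by nlinarith
    have h2 : (1:ℝ) / a i ≤ (a₀ + a₁ - a i) / (a₀ * a₁) := by
      rw [div_le_div_iff₀ hai h01pos]; linarith
    calc p i / a i = p i * (1 / a i) := by ring
      _ ≤ p i * ((a₀ + a₁ - a i) / (a₀ * a₁)) := by
          exact mul_le_mul_of_nonneg_left h2 (hp0 i)
      _ = p i * (a₀ + a₁ - a i) / (a₀ * a₁) := by ring
  calc ∑ i, p i / a i ≤ ∑ i, p i * (a₀ + a₁ - a i) / (a₀ * a₁) :=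
        Finset.sum_le_sum fun i _ => key i
    _ = (a₀ + a₁ - abar) / (a₀ * a₁) := by
        rw [← Finset.sum_div]
        congr 1
        have : ∑ i, p i * (a₀ + a₁ - a i)
            = (a₀ + a₁) * (∑ i, p i) - ∑ i, p i * a i := by
          rw [Finset.mul_sum, ← Finset.sum_sub_distrib]
          exact Finset.sum_congr rfl fun i _ => by ring
        rw [this, hp1, hmean]; ring
end

section
/- Let a₁ ≥ a₀ > 0 and let p be a probability distribution of a random variable A taking finitely many values in [a₀, a₁] with E_p[A] = ā. Let q be a probability distribution on k-tuples of strictly positive reals such that the fidelity F(p^{⊗k}, q) ≥ δ^{k/2} for some δ ∈ [0,1]. Then E_q[∏_{l=1}^k A_l] ≥ (δ a₀ a₁ / (a₀ + a₁ − ā))^k. -/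
/-- Product fidelity–expectation bound (Corollary `expectation-fidelity`):
if `F(p^{⊗k}, q) ≥ δ^{k/2}` then `E_q[∏ A_l] ≥ (δ a₀ a₁/(a₀+a₁−ā))^k`. -/
theorem product_expectation_fidelity {ι : Type*} [Fintype ι] (k : ℕ)
    (a : ι → ℝ) (p : ι → ℝ) (a₀ a₁ abar : ℝ)
    (h0 : 0 < a₀) (h01 : a₀ ≤ a₁)
    (hrange : ∀ i, a i ∈ Set.Icc a₀ a₁)
    (hp0 : ∀ i, 0 ≤ p i) (hp1 : ∑ i, p i = 1)
    (hmean : ∑ i, p i * a i = abar)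
    (q : (Fin k → ι) → ℝ) (hq0 : ∀ t, 0 ≤ q t) (hq1 : ∑ t, q t = 1)
    (δ : ℝ) (hδ0 : 0 ≤ δ) (hδ1 : δ ≤ 1)
    (hF : Real.sqrt δ ^ k ≤ ∑ t, Real.sqrt ((∏ l, p (t l)) * q t)) :
    (δ * a₀ * a₁ / (a₀ + a₁ - abar)) ^ k ≤ ∑ t, q t * ∏ l, a (t l) := by
  have ha1 : (0:ℝ) < a₁ := lt_of_lt_of_le h0 h01
  have hapos : ∀ i, 0 < a i := fun i => lt_of_lt_of_le h0 (hrange i).1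
  have habar_le : abar ≤ a₁ := by
    rw [← hmean]
    calc ∑ i, p i * a i ≤ ∑ i, p i * a₁ :=
          Finset.sum_le_sum fun i _ => mul_le_mul_of_nonneg_left (hrange i).2 (hp0 i)
      _ = a₁ := by rw [← Finset.sum_mul, hp1, one_mul]
  have hD0 : (0:ℝ) < a₀ + a₁ - abar := by linarith
  set C : ℝ := (a₀ + a₁ - abar) / (a₀ * a₁) with hC
  have hC0 : 0 < C := div_pos hD0 (mul_pos h0 ha1)
  -- pointwise bound: p i / a i ≤ p i * (a₀ + a₁ - a i) / (a₀ * a₁)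
  have hptw : ∀ i, p i / a i ≤ p i * (a₀ + a₁ - a i) / (a₀ * a₁) := by
    intro i
    rw [div_le_div_iff₀ (hapos i) (mul_pos h0 ha1)]
    have h1 := (hrange i).1
    have h2 := (hrange i).2
    nlinarith [hp0 i, mul_nonneg (hp0 i) (mul_nonneg (sub_nonneg.2 h1) (sub_nonneg.2 h2))]
  have hc_le : ∑ i, p i / a i ≤ C := by
    calc ∑ i, p i / a i ≤ ∑ i, p i * (a₀ + a₁ - a i) / (a₀ * a₁) :=
          Finset.sum_le_sum fun i _ => hptw i
      _ = ((∑ i, p i) * (a₀ + a₁) - ∑ i, p i * a i) / (a₀ * a₁) := by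
          rw [← Finset.sum_div, Finset.sum_mul]
          congr 1
          rw [← Finset.sum_sub_distrib]
          exact Finset.sum_congr rfl fun i _ => by ring
      _ = C := by rw [hp1, hmean, hC, one_mul]
  have hc0 : 0 ≤ ∑ i, p i / a i :=
    Finset.sum_nonneg fun i _ => div_nonneg (hp0 i) (hapos i).le
  set E : ℝ := ∑ t, q t * ∏ l, a (t l) with hE
  have hE0 : 0 ≤ E :=
    Finset.sum_nonneg fun t _ =>
      mul_nonneg (hq0 t) (Finset.prod_nonneg fun l _ => (hapos (t l)).le)
  -- Cauchy–Schwarz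
  have hCS : (∑ t : Fin k → ι, Real.sqrt ((∏ l, p (t l)) * q t)) ^ 2 ≤
      (∑ t : Fin k → ι, (∏ l, p (t l) / a (t l))) * E := by
    have key := Finset.sum_mul_sq_le_sq_mul_sq Finset.univ
      (fun t : Fin k → ι => Real.sqrt (∏ l, p (t l) / a (t l)))
      (fun t : Fin k → ι => Real.sqrt (q t * ∏ l, a (t l)))
    have h1 : ∀ t : Fin k → ι,
        Real.sqrt (∏ l, p (t l) / a (t l)) * Real.sqrt (q t * ∏ l, a (t l)) =
          Real.sqrt ((∏ l, p (t l)) * q t) := by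
      intro t
      rw [← Real.sqrt_mul (Finset.prod_nonneg fun l _ =>
        div_nonneg (hp0 (t l)) (hapos (t l)).le)]
      congr 1
      have hAne : (∏ l, a (t l)) ≠ 0 := (Finset.prod_pos fun l _ => hapos (t l)).ne'
      rw [Finset.prod_div_distrib]
      field_simp
    have h2 : ∀ t : Fin k → ι,
        Real.sqrt (∏ l, p (t l) / a (t l)) ^ 2 = ∏ l, p (t l) / a (t l) := by
      intro t
      exact Real.sq_sqrt (Finset.prod_nonneg fun l _ =>
        div_nonneg (hp0 (t l)) (hapos (t l)).le)
    have h3 : ∀ t : Fin k → ι,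
        Real.sqrt (q t * ∏ l, a (t l)) ^ 2 = q t * ∏ l, a (t l) := by
      intro t
      exact Real.sq_sqrt (mul_nonneg (hq0 t)
        (Finset.prod_nonneg fun l _ => (hapos (t l)).le))
    calc (∑ t : Fin k → ι, Real.sqrt ((∏ l, p (t l)) * q t)) ^ 2
        = (∑ t : Fin k → ι, Real.sqrt (∏ l, p (t l) / a (t l)) *
            Real.sqrt (q t * ∏ l, a (t l))) ^ 2 := by
          congr 1; exact Finset.sum_congr rfl fun t _ => (h1 t).symm
      _ ≤ (∑ t : Fin k → ι, Real.sqrt (∏ l, p (t l) / a (t l)) ^ 2) *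
            (∑ t : Fin k → ι, Real.sqrt (q t * ∏ l, a (t l)) ^ 2) := key
      _ = (∑ t : Fin k → ι, (∏ l, p (t l) / a (t l))) * E := by
          rw [hE]
          congr 1
          · exact Finset.sum_congr rfl fun t _ => h2 t
          · exact Finset.sum_congr rfl fun t _ => h3 t
  -- factorize the product sum
  have hfact : (∑ t : Fin k → ι, (∏ l, p (t l) / a (t l))) = (∑ i, p i / a i) ^ k := by
    rw [eq_comm]
    calc (∑ i, p i / a i) ^ k = ∏ _l : Fin k, ∑ i, p i / a i := by
          rw [Finset.prod_const, Finset.card_univ, Fintype.card_fin]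
      _ = _ := by
          rw [Finset.prod_univ_sum (fun _ : Fin k => (Finset.univ : Finset ι))
            (fun _ i => p i / a i), Fintype.piFinset_univ]
  have hFnn : 0 ≤ ∑ t : Fin k → ι, Real.sqrt ((∏ l, p (t l)) * q t) :=
    Finset.sum_nonneg fun t _ => Real.sqrt_nonneg _
  have hδk : δ ^ k ≤ (∑ t : Fin k → ι, Real.sqrt ((∏ l, p (t l)) * q t)) ^ 2 := by
    have := pow_le_pow_left₀ (by positivity) hF 2
    calc δ ^ k = (Real.sqrt δ ^ k) ^ 2 := by
          rw [← pow_mul, mul_comm, pow_mul, Real.sq_sqrt hδ0]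
      _ ≤ _ := this
  have hchain : δ ^ k ≤ C ^ k * E := by
    calc δ ^ k ≤ (∑ t : Fin k → ι, Real.sqrt ((∏ l, p (t l)) * q t)) ^ 2 := hδk
      _ ≤ (∑ i, p i / a i) ^ k * E := by rw [← hfact]; exact hCS
      _ ≤ C ^ k * E := mul_le_mul_of_nonneg_right (pow_le_pow_left₀ hc0 hc_le k) hE0
  have hgoal : (δ * a₀ * a₁ / (a₀ + a₁ - abar)) ^ k = δ ^ k / C ^ k := by
    rw [← div_pow]
    congr 1
    rw [hC]
    field_simp
  rw [hgoal, div_le_iff₀ (pow_pos hC0 k)]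
  linarith [hchain]
end

section
/- Let Y₁, …, Y_k ∈ {−1, +1} be random variables, −1 ≤ β ≤ 1 and C > 0, such that for every subset S ⊆ [k], E[∏_{i∈S} Y_i] ≤ C·β^{|S|}. Then for any λ with β ≤ λ ≤ 1, Pr[Σ_{i=1}^k Y_i ≥ λk] ≤ C·exp(−k·D(1/2 + λ/2 ‖ 1/2 + β/2)). -/
/-- Binary relative entropy `D(α‖μ) = α ln(α/μ) + (1−α) ln((1−α)/(1−μ))`,
with the convention `0 · ln 0 = 0` (automatic since `Real.log 0 = 0`). -/
noncomputable def binaryRelEntropy (α μ : ℝ) : ℝ :=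
  α * Real.log (α / μ) + (1 - α) * Real.log ((1 - α) / (1 - μ))

private lemma expand_bound {Ω : Type*} [Fintype Ω] (μ : Ω → ℝ)
    {k : ℕ} (Y : Fin k → Ω → ℝ) {β C : ℝ} {t : ℝ} (ht : 0 ≤ t)
    (hE : ∀ S : Finset (Fin k), ∑ ω, μ ω * ∏ i ∈ S, Y i ω ≤ C * β ^ S.card) :
    ∑ ω, μ ω * ∏ i, (1 + t * Y i ω) ≤ C * (1 + t * β) ^ k := by
  have key : ∀ (Z : Fin k → ℝ), ∏ i, (1 + t * Z i)
      = ∑ S ∈ (Finset.univ : Finset (Fin k)).powerset, t ^ S.card * ∏ i ∈ S, Z i := by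
    intro Z
    have h : ∏ i, (1 + t * Z i) = ∏ i, (t * Z i + 1) :=
      Finset.prod_congr rfl fun i _ => add_comm _ _
    rw [h, Finset.prod_add]
    refine Finset.sum_congr rfl fun S _ => ?_
    rw [Finset.prod_const_one, mul_one, Finset.prod_mul_distrib, Finset.prod_const]
  calc ∑ ω, μ ω * ∏ i, (1 + t * Y i ω)
      = ∑ S ∈ (Finset.univ : Finset (Fin k)).powerset,
          t ^ S.card * ∑ ω, μ ω * ∏ i ∈ S, Y i ω := by
        simp_rw [key, Finset.mul_sum]
        rw [Finset.sum_comm]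
        refine Finset.sum_congr rfl fun S _ => ?_
        exact Finset.sum_congr rfl fun ω _ => by ring
    _ ≤ ∑ S ∈ (Finset.univ : Finset (Fin k)).powerset, t ^ S.card * (C * β ^ S.card) :=
        Finset.sum_le_sum fun S _ => mul_le_mul_of_nonneg_left (hE S) (pow_nonneg ht _)
    _ = C * ∑ S ∈ (Finset.univ : Finset (Fin k)).powerset, t ^ S.card * β ^ S.card := by
        rw [Finset.mul_sum]; exact Finset.sum_congr rfl fun S _ => by ring
    _ = C * (1 + t * β) ^ k := by
        congr 1
        have h2 := key (fun _ => β)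
        rw [Finset.prod_const, Finset.card_univ, Fintype.card_fin] at h2
        rw [h2]
        exact Finset.sum_congr rfl fun S _ => by rw [Finset.prod_const]

/-- Unger's threshold lemma: if all parities of subsets of the `±1`-valued random
variables `Y i` have expectation at most `C β^{|S|}`, then the probability that their
sum is at least `λ k` is at most `C e^{−k D(1/2+λ/2 ‖ 1/2+β/2)}`. -/
theorem threshold_lemma {Ω : Type*} [Fintype Ω] (μ : Ω → ℝ)
    (hμ0 : ∀ ω, 0 ≤ μ ω) (hμ1 : ∑ ω, μ ω = 1)
    (k : ℕ) (Y : Fin k → Ω → ℝ) (hY : ∀ i ω, Y i ω = 1 ∨ Y i ω = -1)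
    (β : ℝ) (hβ : -1 ≤ β ∧ β ≤ 1) (C : ℝ) (hC : 0 < C)
    (hE : ∀ S : Finset (Fin k), ∑ ω, μ ω * ∏ i ∈ S, Y i ω ≤ C * β ^ S.card)
    (lam : ℝ) (hlam : β ≤ lam ∧ lam ≤ 1) :
    (∑ ω, if lam * k ≤ ∑ i, Y i ω then μ ω else 0) ≤
      C * Real.exp (-(k : ℝ) * binaryRelEntropy (1 / 2 + lam / 2) (1 / 2 + β / 2)) := by
  obtain ⟨hβ1, hβ2⟩ := hβ
  obtain ⟨hlb, hl1⟩ := hlam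
  have hC1 : (1:ℝ) ≤ C := by
    have h := hE ∅
    simp only [Finset.prod_empty, mul_one, Finset.card_empty, pow_zero] at h
    rwa [hμ1] at h
  have hLHS1 : (∑ ω, if lam * k ≤ ∑ i, Y i ω then μ ω else 0) ≤ 1 := by
    rw [← hμ1]
    refine Finset.sum_le_sum fun ω _ => ?_
    split <;> simp [hμ0 ω]
  -- the counting function
  set m : Ω → ℕ := fun ω => (Finset.univ.filter (fun i => Y i ω = 1)).card with hm
  have hmk : ∀ ω, m ω ≤ k := fun ω => by
    simpa using (Finset.card_filter_le Finset.univ (fun i => Y i ω = 1))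
  have hsum : ∀ ω, ∑ i, Y i ω = 2 * (m ω : ℝ) - k := by
    intro ω
    rw [← Finset.sum_filter_add_sum_filter_not Finset.univ (fun i => Y i ω = 1)]
    have h1 : ∑ i ∈ Finset.univ.filter (fun i => Y i ω = 1), Y i ω = (m ω : ℝ) := by
      rw [Finset.sum_congr rfl (fun i hi => (Finset.mem_filter.mp hi).2)]
      simp [hm]
    have h2 : ∑ i ∈ Finset.univ.filter (fun i => ¬ Y i ω = 1), Y i ω
        = -((k : ℝ) - m ω) := by
      have : ∀ i ∈ Finset.univ.filter (fun i => ¬ Y i ω = 1), Y i ω = -1 := by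
        intro i hi
        rcases hY i ω with h | h
        · exact absurd h (Finset.mem_filter.mp hi).2
        · exact h
      rw [Finset.sum_congr rfl this, Finset.sum_const]
      have hcard : (Finset.univ.filter (fun i => ¬ Y i ω = 1)).card = k - m ω := by
        have := Finset.card_filter_add_card_filter_not
          (s := (Finset.univ : Finset (Fin k))) (p := fun i => Y i ω = 1)

        have h' : m ω + (Finset.univ.filter (fun i => ¬ Y i ω = 1)).card = k := by
          simpa using this
        omega
      rw [hcard]
      have : ((k - m ω : ℕ) : ℝ) = (k : ℝ) - m ω := by
        have := hmk ω; push_cast [Nat.cast_sub this]; ring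
      simp [this]
    rw [h1, h2]; ring
  have hprod : ∀ (t : ℝ) (ω), ∏ i, (1 + t * Y i ω) = (1+t)^(m ω) * (1-t)^(k - m ω) := by
    intro t ω
    rw [← Finset.prod_filter_mul_prod_filter_not Finset.univ (fun i => Y i ω = 1)]
    congr 1
    · rw [Finset.prod_congr rfl (fun i hi => by rw [(Finset.mem_filter.mp hi).2])]
      simp [hm]
    · have hv : ∀ i ∈ Finset.univ.filter (fun i => ¬ Y i ω = 1), 1 + t * Y i ω = 1 - t := by
        intro i hi
        rcases hY i ω with h | h
        · exact absurd h (Finset.mem_filter.mp hi).2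
        · rw [h]; ring
      rw [Finset.prod_congr rfl hv, Finset.prod_const]
      congr 1
      have := Finset.card_filter_add_card_filter_not
        (s := (Finset.univ : Finset (Fin k))) (p := fun i => Y i ω = 1)

      have h' : m ω + (Finset.univ.filter (fun i => ¬ Y i ω = 1)).card = k := by
        simpa using this
      omega
  by_cases hbm1 : β = -1
  · -- degenerate case: rhs ≥ C ≥ 1 ≥ lhs
    have hD : binaryRelEntropy (1/2 + lam/2) (1/2 + β/2) ≤ 0 := by
      subst hbm1
      unfold binaryRelEntropy
      have h0 : (1:ℝ)/2 + (-1)/2 = 0 := by norm_num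
      rw [h0, div_zero, Real.log_zero, mul_zero, zero_add, sub_zero, div_one]
      exact mul_nonpos_of_nonneg_of_nonpos (by linarith)
        (Real.log_nonpos (by linarith) (by linarith))
    have hexp1 : (1:ℝ) ≤ Real.exp (-(k:ℝ) * binaryRelEntropy (1/2 + lam/2) (1/2 + β/2)) := by
      apply Real.one_le_exp
      have : (0:ℝ) ≤ (k:ℝ) := Nat.cast_nonneg k
      nlinarith
    calc (∑ ω, if lam * k ≤ ∑ i, Y i ω then μ ω else 0) ≤ 1 := hLHS1
      _ ≤ C := hC1
      _ ≤ _ := le_mul_of_one_le_right hC.le hexp1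
  have hb1 : -1 < β := lt_of_le_of_ne hβ1 (Ne.symm hbm1)
  have hfnn : ∀ (t : ℝ), 0 ≤ t → t ≤ 1 → ∀ ω, 0 ≤ ∏ i, (1 + t * Y i ω) := by
    intro t ht0 ht1 ω
    refine Finset.prod_nonneg fun i _ => ?_
    rcases hY i ω with h | h <;> rw [h] <;> linarith
  by_cases hle : lam = 1
  · -- case lam = 1 : take t = 1
    subst hle
    have hp : (0:ℝ) < 1/2 + β/2 := by linarith
    have hev : ∀ ω, ((1:ℝ) * k ≤ ∑ i, Y i ω) → m ω = k := by
      intro ω h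
      rw [hsum ω] at h
      have hk : (k:ℝ) ≤ m ω := by linarith
      exact le_antisymm (hmk ω) (by exact_mod_cast hk)
    have hstep : (∑ ω, if (1:ℝ) * k ≤ ∑ i, Y i ω then μ ω else 0) * 2^k
        ≤ ∑ ω, μ ω * ∏ i, (1 + 1 * Y i ω) := by
      rw [Finset.sum_mul]
      refine Finset.sum_le_sum fun ω _ => ?_
      by_cases h : (1:ℝ) * k ≤ ∑ i, Y i ω
      · rw [if_pos h, hprod 1 ω, hev ω h]
        norm_num
      · rw [if_neg h, zero_mul]
        exact mul_nonneg (hμ0 ω) (hfnn 1 zero_le_one le_rfl ω)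
    have h2 := expand_bound μ Y (zero_le_one) hE
    have h3 : (∑ ω, if (1:ℝ) * k ≤ ∑ i, Y i ω then μ ω else 0)
        ≤ C * (1 + 1 * β)^k / 2^k := by
      rw [le_div_iff₀ (by positivity)]
      exact hstep.trans h2
    have hD : binaryRelEntropy (1/2 + 1/2) (1/2 + β/2) = - Real.log (1/2 + β/2) := by
      unfold binaryRelEntropy
      rw [show (1:ℝ)/2 + 1/2 = 1 by norm_num]
      rw [one_div, Real.log_inv]
      ring
    rw [hD]
    have hRHS : Real.exp (-(k:ℝ) * - Real.log (1/2 + β/2)) = (1/2 + β/2)^k := by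
      rw [neg_mul_neg, Real.exp_nat_mul, Real.exp_log hp]
    rw [hRHS]
    have heq : C * (1 + 1 * β)^k / 2^k = C * (1/2 + β/2)^k := by
      have : (1 + 1 * β)^k = 2^k * (1/2 + β/2)^k := by
        rw [← mul_pow]; congr 1; ring
      rw [this]; field_simp
    rw [← heq]
    exact h3
  -- main case: -1 < β ≤ lam < 1
  have hl2 : lam < 1 := lt_of_le_of_ne hl1 hle
  have hb2 : β < 1 := lt_of_le_of_lt hlb hl2
  have hl0 : -1 < lam := lt_of_lt_of_le hb1 hlb
  have he : (0:ℝ) < 1 - lam * β := by nlinarith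
  set t : ℝ := (lam - β)/(1 - lam * β) with htdef
  have ht0 : 0 ≤ t := div_nonneg (by linarith) he.le
  have h1t : 0 < 1 - t := by
    have : t < 1 := by
      rw [htdef, div_lt_one he]
      nlinarith
    linarith
  have hpt : (0:ℝ) < 1 + t := by linarith
  have htb : (0:ℝ) < 1 + t * β := by nlinarith
  have na : (1:ℝ) + lam ≠ 0 := by linarith
  have nb : (1:ℝ) - lam ≠ 0 := by linarith
  have nc : (1:ℝ) + β ≠ 0 := by linarith
  have nd : (1:ℝ) - β ≠ 0 := by linarith
  have nee : (1:ℝ) - lam * β ≠ 0 := he.ne'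
  have hid1 : 1 + t * β = (1 + β) * (1 - β) / (1 - lam * β) := by
    rw [htdef]; field_simp; ring
  have hid2 : 1 + t = (1 + lam) * (1 - β) / (1 - lam * β) := by
    rw [htdef]; field_simp; ring
  have hid3 : 1 - t = (1 - lam) * (1 + β) / (1 - lam * β) := by
    rw [htdef]; field_simp; ring
  -- monotonicity of x ↦ (1+t)^x (1-t)^(k-x)
  have grw : ∀ x : ℝ, (1+t)^x * (1-t)^((k:ℝ)-x) = (1-t)^(k:ℝ) * ((1+t)/(1-t))^x := by
    intro x
    rw [Real.div_rpow hpt.le h1t.le, Real.rpow_sub h1t]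
    have hne1 : (1-t)^x ≠ 0 := (Real.rpow_pos_of_pos h1t x).ne'
    field_simp
  have mono : ∀ x y : ℝ, x ≤ y →
      (1+t)^x * (1-t)^((k:ℝ)-x) ≤ (1+t)^y * (1-t)^((k:ℝ)-y) := by
    intro x y hxy
    rw [grw, grw]
    refine mul_le_mul_of_nonneg_left ?_ (Real.rpow_nonneg h1t.le _)
    refine Real.rpow_le_rpow_of_exponent_le ?_ hxy
    rw [le_div_iff₀ h1t]; linarith
  have hpoint : ∀ ω, (lam * k ≤ ∑ i, Y i ω) →
      (1+t)^((1/2+lam/2)*(k:ℝ)) * (1-t)^((1-(1/2+lam/2))*(k:ℝ))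
        ≤ ∏ i, (1 + t * Y i ω) := by
    intro ω h
    rw [hsum ω] at h
    have hAm : (1/2+lam/2) * (k:ℝ) ≤ (m ω : ℝ) := by linarith
    rw [hprod t ω]
    have hcast : ((k - m ω : ℕ):ℝ) = (k:ℝ) - m ω := Nat.cast_sub (hmk ω)
    calc (1+t)^((1/2+lam/2)*(k:ℝ)) * (1-t)^((1-(1/2+lam/2))*(k:ℝ))
        = (1+t)^((1/2+lam/2)*(k:ℝ)) * (1-t)^((k:ℝ) - (1/2+lam/2)*(k:ℝ)) := by
          rw [show (1-(1/2+lam/2))*(k:ℝ) = (k:ℝ) - (1/2+lam/2)*(k:ℝ) from by ring]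
      _ ≤ (1+t)^((m ω : ℝ)) * (1-t)^((k:ℝ) - (m ω : ℝ)) := mono _ _ hAm
      _ = (1+t)^(m ω) * (1-t)^(k - m ω) := by
          rw [← hcast, Real.rpow_natCast, Real.rpow_natCast]
  set M : ℝ := (1+t)^((1/2+lam/2)*(k:ℝ)) * (1-t)^((1-(1/2+lam/2))*(k:ℝ)) with hMdef
  have hM : 0 < M :=
    mul_pos (Real.rpow_pos_of_pos hpt _) (Real.rpow_pos_of_pos h1t _)
  have hstep : (∑ ω, if lam * k ≤ ∑ i, Y i ω then μ ω else 0) * M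
      ≤ ∑ ω, μ ω * ∏ i, (1 + t * Y i ω) := by
    rw [Finset.sum_mul]
    refine Finset.sum_le_sum fun ω _ => ?_
    by_cases h : lam * k ≤ ∑ i, Y i ω
    · rw [if_pos h]
      exact mul_le_mul_of_nonneg_left (hpoint ω h) (hμ0 ω)
    · rw [if_neg h, zero_mul]
      exact mul_nonneg (hμ0 ω) (hfnn t ht0 (by linarith) ω)
  have h3 : (∑ ω, if lam * k ≤ ∑ i, Y i ω then μ ω else 0)
      ≤ C * (1 + t * β)^k / M := by
    rw [le_div_iff₀ hM]
    exact hstep.trans (expand_bound μ Y ht0 hE)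
  have hexp : Real.log (1 + t * β) * (k:ℝ)
      - (Real.log (1+t) * ((1/2+lam/2)*(k:ℝ)) + Real.log (1-t) * ((1-(1/2+lam/2))*(k:ℝ)))
      = -(k:ℝ) * binaryRelEntropy (1/2 + lam/2) (1/2 + β/2) := by
    unfold binaryRelEntropy
    have e1 : (1/2 + lam/2) / (1/2 + β/2) = (1 + lam)/(1 + β) := by
      rw [div_eq_div_iff (by linarith) (by linarith)]; ring
    have e2 : (1 - (1/2 + lam/2)) / (1 - (1/2 + β/2)) = (1 - lam)/(1 - β) := by
      rw [div_eq_div_iff (by linarith) (by linarith)]; ring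
    rw [hid1, hid2, hid3, e1, e2,
      Real.log_div (mul_ne_zero nc nd) nee, Real.log_mul nc nd,
      Real.log_div (mul_ne_zero na nd) nee, Real.log_mul na nd,
      Real.log_div (mul_ne_zero nb nc) nee, Real.log_mul nb nc,
      Real.log_div na nc, Real.log_div nb nd]
    ring
  calc (∑ ω, if lam * k ≤ ∑ i, Y i ω then μ ω else 0)
      ≤ C * (1 + t * β)^k / M := h3
    _ = C * Real.exp (-(k:ℝ) * binaryRelEntropy (1/2 + lam/2) (1/2 + β/2)) := by
        rw [hMdef, ← Real.rpow_natCast (1 + t * β) k, Real.rpow_def_of_pos htb,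
          Real.rpow_def_of_pos hpt, Real.rpow_def_of_pos h1t, ← Real.exp_add,
          mul_div_assoc, ← Real.exp_sub, hexp]
end

section
/- Let D(A) be a diagonal matrix with positive diagonal entries a_1, …, a_m, let u be a unit vector with entries √p_i for a probability distribution p, and let 0 ≤ δ ≤ 1. Then the minimum of Tr(D(A)ρ) over density matrices ρ ⪰ 0 with Tr(ρ) = 1 and Tr(|u⟩⟨u| ρ) ≥ δ is at least δ / (Σ_i p_i/a_i). -/
open Matrix Finset
open scoped ComplexOrder

lemma sum_comm3 {ι : Type*} [Fintype ι] {M : Type*} [AddCommMonoid M]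
    (f : ι → ι → ι → M) :
    (∑ i, ∑ j, ∑ k, f i j k) = ∑ k, ∑ j, ∑ i, f i j k :=
  calc (∑ i, ∑ j, ∑ k, f i j k) = ∑ j, ∑ i, ∑ k, f i j k := Finset.sum_comm
    _ = ∑ j, ∑ k, ∑ i, f i j k := Finset.sum_congr rfl fun _ _ => Finset.sum_comm
    _ = ∑ k, ∑ j, ∑ i, f i j k := Finset.sum_comm

/-- SDP lower bound: the minimum of `Tr(D(A)ρ)` over density matrices `ρ` with
`Tr(|u⟩⟨u|ρ) ≥ δ`, where `u` has entries `√p_i`, is at least `δ / Σ_i p_i/a_i`. -/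
theorem sdp_diag_lower_bound {ι : Type*} [Fintype ι] [DecidableEq ι]
    (a : ι → ℝ) (ha : ∀ i, 0 < a i)
    (p : ι → ℝ) (hp0 : ∀ i, 0 ≤ p i) (hp1 : ∑ i, p i = 1)
    (δ : ℝ) (hδ0 : 0 ≤ δ) (hδ1 : δ ≤ 1)
    (ρ : Matrix ι ι ℂ) (hρ : ρ.PosSemidef) (hρtr : ρ.trace = 1)
    (hover : δ ≤ (Matrix.trace
      ((Matrix.of fun i j => ((Real.sqrt (p i) * Real.sqrt (p j) : ℝ) : ℂ)) * ρ)).re) :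
    δ / (∑ i, p i / a i) ≤
      (Matrix.trace (Matrix.diagonal (fun i => ((a i : ℝ) : ℂ)) * ρ)).re := by
  obtain ⟨B, hB⟩ : ∃ B : Matrix ι ι ℂ, ρ = Bᴴ * B := by
    open MatrixOrder in
    obtain ⟨B, hB⟩ := CStarAlgebra.nonneg_iff_eq_star_mul_self.mp hρ.nonneg
    exact ⟨B, hB⟩
  subst hB
  set S : ℝ := ∑ i, p i / a i with hS
  have hSpos : 0 < S := by
    have : ∃ i, 0 < p i := by
      by_contra h
      push_neg at h
      have : ∑ i, p i = 0 := Finset.sum_eq_zero fun i _ => le_antisymm (h i) (hp0 i)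
      simp [this] at hp1
    obtain ⟨i, hi⟩ := this
    exact Finset.sum_pos' (fun j _ => div_nonneg (hp0 j) (ha j).le)
      ⟨i, Finset.mem_univ i, div_pos hi (ha i)⟩
  set c : ι → ℂ := fun k => ∑ i, ((Real.sqrt (p i) : ℝ) : ℂ) * B k i with hc
  -- trace of uu* ρ
  have hA : (Matrix.trace
      ((Matrix.of fun i j => ((Real.sqrt (p i) * Real.sqrt (p j) : ℝ) : ℂ)) * (Bᴴ * B))).re
      = ∑ k, Complex.normSq (c k) := by
    have h1 : (Matrix.trace
        ((Matrix.of fun i j => ((Real.sqrt (p i) * Real.sqrt (p j) : ℝ) : ℂ)) * (Bᴴ * B)))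
        = ∑ k, (starRingEnd ℂ) (c k) * c k := by
      simp only [Matrix.trace, Matrix.diag, Matrix.mul_apply, Matrix.of_apply,
        Matrix.conjTranspose_apply, hc, map_sum, Finset.mul_sum, Finset.sum_mul,
        Complex.conj_ofReal, _root_.map_mul]
      rw [sum_comm3]
      refine Finset.sum_congr rfl fun k _ => ?_
      rw [Finset.sum_comm]
      refine Finset.sum_congr rfl fun j _ => ?_
      refine Finset.sum_congr rfl fun i _ => ?_
      simp only [Complex.star_def]
      push_cast
      ring
    rw [h1]
    simp [Complex.normSq_eq_conj_mul_self, Complex.normSq_apply]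
  -- trace of D ρ
  have hT : (Matrix.trace (Matrix.diagonal (fun i => ((a i : ℝ) : ℂ)) * (Bᴴ * B))).re
      = ∑ i, a i * ∑ k, Complex.normSq (B k i) := by
    have h1 : Matrix.trace (Matrix.diagonal (fun i => ((a i : ℝ) : ℂ)) * (Bᴴ * B))
        = ∑ i, ((a i : ℂ) * ∑ k, (Complex.normSq (B k i) : ℂ)) := by
      simp only [Matrix.trace, Matrix.diag, Matrix.mul_apply, Matrix.diagonal_apply,
        Matrix.conjTranspose_apply, ite_mul, zero_mul, Finset.sum_ite_eq,
        Finset.mem_univ, if_true, Finset.mul_sum, Complex.normSq_eq_conj_mul_self,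
        Complex.star_def]
      refine Finset.sum_congr rfl fun x _ => ?_
      rw [Finset.sum_comm]
      simp
    rw [h1]
    simp
  rw [hT]
  rw [hA] at hover
  -- Cauchy-Schwarz per k
  have key : ∀ k, Complex.normSq (c k) ≤ S * ∑ i, a i * Complex.normSq (B k i) := by
    intro k
    have h2 : ‖c k‖ ≤ ∑ i, Real.sqrt (p i) * ‖B k i‖ := by
      refine (norm_sum_le _ _).trans ?_
      refine Finset.sum_le_sum fun i _ => ?_
      rw [norm_mul, Complex.norm_real, Real.norm_eq_abs,
        abs_of_nonneg (Real.sqrt_nonneg _)]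
    have h3 : Complex.normSq (c k) = ‖c k‖ ^ 2 := (Complex.sq_norm _).symm
    have h4 : ‖c k‖ ^ 2 ≤ (∑ i, Real.sqrt (p i) * ‖B k i‖) ^ 2 :=
      pow_le_pow_left₀ (norm_nonneg _) h2 2
    have h5 : (∑ i, Real.sqrt (p i) * ‖B k i‖) ^ 2
        ≤ S * ∑ i, a i * Complex.normSq (B k i) := by
      have heq : ∀ i, Real.sqrt (p i) * ‖B k i‖
          = Real.sqrt (p i / a i) * (Real.sqrt (a i) * ‖B k i‖) := by
        intro i
        rw [← mul_assoc, ← Real.sqrt_mul (div_nonneg (hp0 i) (ha i).le),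
          div_mul_cancel₀ _ (ha i).ne']
      calc (∑ i, Real.sqrt (p i) * ‖B k i‖) ^ 2
          = (∑ i, Real.sqrt (p i / a i) * (Real.sqrt (a i) * ‖B k i‖)) ^ 2 := by
            simp_rw [heq]
        _ ≤ (∑ i, Real.sqrt (p i / a i) ^ 2) * ∑ i, (Real.sqrt (a i) * ‖B k i‖) ^ 2 :=
            Finset.sum_mul_sq_le_sq_mul_sq _ _ _
        _ = S * ∑ i, a i * Complex.normSq (B k i) := by
            congr 1
            · refine Finset.sum_congr rfl fun i _ => ?_
              exact Real.sq_sqrt (div_nonneg (hp0 i) (ha i).le)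
            · refine Finset.sum_congr rfl fun i _ => ?_
              rw [mul_pow, Real.sq_sqrt (ha i).le, Complex.sq_norm]
    linarith
  have hsum : ∑ k, Complex.normSq (c k) ≤ S * ∑ i, a i * ∑ k, Complex.normSq (B k i) := by
    calc ∑ k, Complex.normSq (c k) ≤ ∑ k, S * ∑ i, a i * Complex.normSq (B k i) :=
          Finset.sum_le_sum fun k _ => key k
      _ = S * ∑ i, a i * ∑ k, Complex.normSq (B k i) := by
          rw [← Finset.mul_sum, Finset.sum_comm]
          simp_rw [Finset.mul_sum]
  rw [div_le_iff₀ hSpos]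
  calc δ ≤ ∑ k, Complex.normSq (c k) := hover
    _ ≤ S * ∑ i, a i * ∑ k, Complex.normSq (B k i) := hsum
    _ = (∑ i, a i * ∑ k, Complex.normSq (B k i)) * S := mul_comm _ _
end

section
/- Let ρ and σ be positive semidefinite n×n matrices with factorizations ρ = A*A and σ = B*B. Then the trace norm ‖A B*‖₁ equals ‖ρ^{1/2} σ^{1/2}‖₁; in particular the quantity F(ρ,σ) = ‖ρ^{1/2}σ^{1/2}‖₁ is independent of the chosen factorization. -/
open Matrix
open scoped ComplexOrder
open Classical

/-- The old Mathlib `Matrix.PosSemidef.sqrt` (removed from Mathlib), spelled out. -/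
noncomputable def posSemidefSqrt {n : Type*} [Fintype n] [DecidableEq n] {A : Matrix n n ℂ}
    (hA : A.PosSemidef) : Matrix n n ℂ :=
  (hA.1.eigenvectorUnitary : Matrix n n ℂ) * diagonal (fun i => ((Real.sqrt (hA.1.eigenvalues i) : ℝ) : ℂ)) *
    (star hA.1.eigenvectorUnitary : Matrix n n ℂ)

/-- Trace norm `‖X‖₁ = Tr √(Xᴴ X)`. -/
noncomputable def traceNorm {m n : Type*} [Fintype m] [Fintype n] [DecidableEq n]
    (X : Matrix m n ℂ) : ℝ :=
  ((posSemidefSqrt (Matrix.posSemidef_conjTranspose_mul_self X)).trace).re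

/-- The positive semidefinite square root (junk value `0` otherwise). -/
noncomputable def matSqrt {n : Type*} [Fintype n] [DecidableEq n] (A : Matrix n n ℂ) :
    Matrix n n ℂ :=
  if h : A.PosSemidef then posSemidefSqrt h else 0

lemma posSemidefSqrt_mul_self' {n : Type*} [Fintype n] [DecidableEq n] {A : Matrix n n ℂ}
    (hA : A.PosSemidef) : posSemidefSqrt hA * posSemidefSqrt hA = A := by
  have h2 : star (hA.1.eigenvectorUnitary : Matrix n n ℂ) * (hA.1.eigenvectorUnitary : Matrix n n ℂ) = 1 :=
    Matrix.mem_unitaryGroup_iff'.mp (hA.1.eigenvectorUnitary).2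
  have hM : A = (hA.1.eigenvectorUnitary : Matrix n n ℂ) *
      diagonal (RCLike.ofReal ∘ hA.1.eigenvalues) * star (hA.1.eigenvectorUnitary : Matrix n n ℂ) :=
    hA.1.spectral_theorem
  have hsU : (star hA.1.eigenvectorUnitary : Matrix n n ℂ) =
      star (hA.1.eigenvectorUnitary : Matrix n n ℂ) := rfl
  have hd : diagonal (fun i => ((Real.sqrt (hA.1.eigenvalues i) : ℝ) : ℂ)) *
      diagonal (fun i => ((Real.sqrt (hA.1.eigenvalues i) : ℝ) : ℂ)) =
      diagonal (RCLike.ofReal ∘ hA.1.eigenvalues) := by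
    rw [diagonal_mul_diagonal]
    congr 1
    funext i
    simp [← Complex.ofReal_mul, Real.mul_self_sqrt (hA.eigenvalues_nonneg i)]
  unfold posSemidefSqrt
  rw [hsU]
  conv_rhs => rw [hM, ← hd]
  simp only [Matrix.mul_assoc]
  rw [← Matrix.mul_assoc (star (hA.1.eigenvectorUnitary : Matrix n n ℂ)), h2, Matrix.one_mul]

lemma posSemidefSqrt_herm' {n : Type*} [Fintype n] [DecidableEq n] {A : Matrix n n ℂ}
    (hA : A.PosSemidef) : (posSemidefSqrt hA)ᴴ = posSemidefSqrt hA := by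
  unfold posSemidefSqrt
  have hs : (star fun i => ((Real.sqrt (hA.1.eigenvalues i) : ℝ) : ℂ)) =
      fun i => ((Real.sqrt (hA.1.eigenvalues i) : ℝ) : ℂ) := by
    funext i
    simp
  rw [conjTranspose_mul, conjTranspose_mul, diagonal_conjTranspose, hs]
  simp [Matrix.star_eq_conjTranspose, Matrix.mul_assoc]

/-- If two finite families have equal power sums for all positive exponents, then the sums of
the square roots agree.  Proved by Lagrange interpolation of `Real.sqrt` at the finitely many
relevant points (including `0`, so that the interpolating polynomial has zero constant term). -/
lemma sum_sqrt_eq_of_pow_sums {ι κ : Type*} [Fintype ι] [Fintype κ] (f : ι → ℝ) (g : κ → ℝ)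
    (h : ∀ k : ℕ, k ≠ 0 → ∑ i, f i ^ k = ∑ j, g j ^ k) :
    ∑ i, Real.sqrt (f i) = ∑ j, Real.sqrt (g j) := by
  classical
  set S : Finset ℝ := insert 0 (Finset.univ.image f ∪ Finset.univ.image g) with hS
  set p : Polynomial ℝ := Lagrange.interpolate S id Real.sqrt with hp
  have hinj : Set.InjOn (id : ℝ → ℝ) S := Function.injective_id.injOn
  have hev : ∀ x ∈ S, p.eval x = Real.sqrt x := fun x hx =>
    Lagrange.eval_interpolate_at_node Real.sqrt hinj hx
  have hc0 : p.coeff 0 = 0 := by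
    rw [Polynomial.coeff_zero_eq_eval_zero, hev 0 (Finset.mem_insert_self _ _), Real.sqrt_zero]
  have hf : ∀ i, f i ∈ S := fun i => Finset.mem_insert_of_mem
    (Finset.mem_union_left _ (Finset.mem_image_of_mem f (Finset.mem_univ i)))
  have hg : ∀ j, g j ∈ S := fun j => Finset.mem_insert_of_mem
    (Finset.mem_union_right _ (Finset.mem_image_of_mem g (Finset.mem_univ j)))
  calc ∑ i, Real.sqrt (f i) = ∑ i, p.eval (f i) :=
        Finset.sum_congr rfl fun i _ => (hev _ (hf i)).symm
    _ = ∑ k ∈ Finset.range (p.natDegree + 1), p.coeff k * ∑ i, f i ^ k := by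
        simp_rw [Polynomial.eval_eq_sum_range, Finset.mul_sum]
        rw [Finset.sum_comm]
    _ = ∑ k ∈ Finset.range (p.natDegree + 1), p.coeff k * ∑ j, g j ^ k := by
        refine Finset.sum_congr rfl fun k _ => ?_
        rcases eq_or_ne k 0 with rfl | hk
        · rw [hc0]; simp
        · rw [h k hk]
    _ = ∑ j, p.eval (g j) := by
        simp_rw [Polynomial.eval_eq_sum_range, Finset.mul_sum]
        rw [Finset.sum_comm]
    _ = ∑ j, Real.sqrt (g j) := Finset.sum_congr rfl fun j _ => hev _ (hg j)

/-- The trace of a power of a Hermitian matrix is the corresponding power sum of its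
eigenvalues. -/
lemma trace_pow_eq_sum_eigenvalues {n : Type*} [Fintype n] [DecidableEq n]
    {M : Matrix n n ℂ} (hM : M.IsHermitian) (k : ℕ) :
    (M ^ k).trace = ∑ i, (hM.eigenvalues i : ℂ) ^ k := by
  set U : Matrix n n ℂ := (hM.eigenvectorUnitary : Matrix n n ℂ) with hU
  set D : Matrix n n ℂ := diagonal (RCLike.ofReal ∘ hM.eigenvalues) with hD
  have h2 : star U * U = 1 := Matrix.mem_unitaryGroup_iff'.mp (hM.eigenvectorUnitary).2
  have key : ∀ j : ℕ, (U * D * star U) ^ j = U * D ^ j * star U := by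
    intro j
    induction j with
    | zero =>
      rw [pow_zero, pow_zero, mul_one]
      exact (Matrix.mem_unitaryGroup_iff.mp (hM.eigenvectorUnitary).2).symm
    | succ j ih =>
      rw [pow_succ, ih, pow_succ]
      simp only [mul_assoc]
      rw [← mul_assoc (star U) U (D * star U), h2, one_mul]
  have hM' : M = U * D * star U := hM.spectral_theorem
  conv_lhs => rw [hM', key k]
  rw [Matrix.trace_mul_cycle, h2, one_mul, hD, Matrix.diagonal_pow, Matrix.trace_diagonal]
  simp [RCLike.ofReal_pow]

/-- `Tr ((Xᴴ X)^k) = Tr ((X Xᴴ)^k)` for `k ≠ 0`. -/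
lemma trace_pow_conj_swap {n m : Type*} [Fintype n] [DecidableEq n] [Fintype m] [DecidableEq m]
    (X : Matrix m n ℂ) (k : ℕ) (hk : k ≠ 0) :
    ((Xᴴ * X) ^ k).trace = ((X * Xᴴ) ^ k).trace := by
  obtain ⟨j, rfl⟩ := Nat.exists_eq_succ_of_ne_zero hk
  have key : ∀ j : ℕ, (Xᴴ * X) ^ (j + 1) = Xᴴ * ((X * Xᴴ) ^ j * X) := by
    intro j
    induction j with
    | zero => simp
    | succ j ih =>
      rw [pow_succ, ih, pow_succ]
      simp only [Matrix.mul_assoc]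
  rw [Nat.succ_eq_add_one, key, Matrix.trace_mul_comm, Matrix.mul_assoc, ← pow_succ]

/-- The real part of the trace of the positive semidefinite square root is the sum of the
square roots of the eigenvalues. -/
lemma re_trace_sqrt_eq_sum {n : Type*} [Fintype n] [DecidableEq n]
    (X' : Matrix n n ℂ) (hX : X'.PosSemidef) :
    ((posSemidefSqrt hX).trace).re = ∑ i, Real.sqrt (hX.1.eigenvalues i) := by
  rw [show posSemidefSqrt hX = hX.1.eigenvectorUnitary.1 *
      diagonal ((↑) ∘ Real.sqrt ∘ hX.1.eigenvalues) *
      (star hX.1.eigenvectorUnitary : Matrix n n ℂ) from rfl,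
    Matrix.trace_mul_cycle,
    Matrix.mem_unitaryGroup_iff'.mp (hX.1.eigenvectorUnitary).2, one_mul, Matrix.trace_diagonal]
  simp

/-- Two matrices whose Gram matrices have the same traces of all positive powers have the
same trace norm. -/
lemma traceNorm_ext {m₁ m₂ n₁ n₂ : Type*} [Fintype m₁] [Fintype m₂] [Fintype n₁] [Fintype n₂]
    [DecidableEq n₁] [DecidableEq n₂] (X : Matrix m₁ n₁ ℂ) (Y : Matrix m₂ n₂ ℂ)
    (h : ∀ k : ℕ, k ≠ 0 → ((Xᴴ * X) ^ k).trace = ((Yᴴ * Y) ^ k).trace) :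
    traceNorm X = traceNorm Y := by
  unfold traceNorm
  rw [re_trace_sqrt_eq_sum _ (Matrix.posSemidef_conjTranspose_mul_self X),
    re_trace_sqrt_eq_sum _ (Matrix.posSemidef_conjTranspose_mul_self Y)]
  apply sum_sqrt_eq_of_pow_sums
  intro k hk
  have h1 := trace_pow_eq_sum_eigenvalues (Matrix.posSemidef_conjTranspose_mul_self X).1 k
  have h2 := trace_pow_eq_sum_eigenvalues (Matrix.posSemidef_conjTranspose_mul_self Y).1 k
  have h3 := h1.symm.trans ((h k hk).trans h2)
  exact_mod_cast h3

/-- `‖A Bᴴ‖₁ = ‖ρ^{1/2} σ^{1/2}‖₁` whenever `ρ = AᴴA` and `σ = BᴴB`: the fidelity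
`F(ρ,σ) = ‖ρ^{1/2}σ^{1/2}‖₁` is independent of the factorization. -/
theorem traceNorm_factorization_independent {m m' n : Type*}
    [Fintype m] [Fintype m'] [Fintype n] [DecidableEq m'] [DecidableEq n]
    (A : Matrix m n ℂ) (B : Matrix m' n ℂ) (ρ σ : Matrix n n ℂ)
    (hρ : ρ = Aᴴ * A) (hσ : σ = Bᴴ * B) :
    traceNorm (A * Bᴴ) = traceNorm (matSqrt ρ * matSqrt σ) := by
  subst hρ hσ
  have hρp : (Aᴴ * A).PosSemidef := Matrix.posSemidef_conjTranspose_mul_self A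
  have hσp : (Bᴴ * B).PosSemidef := Matrix.posSemidef_conjTranspose_mul_self B
  have hmR : matSqrt (Aᴴ * A) = posSemidefSqrt hρp := dif_pos hρp
  have hmS : matSqrt (Bᴴ * B) = posSemidefSqrt hσp := dif_pos hσp
  rw [hmR, hmS]
  set R := posSemidefSqrt hρp with hRdef
  set S := posSemidefSqrt hσp with hSdef
  have hR : R * R = Aᴴ * A := posSemidefSqrt_mul_self' hρp
  have hS : S * S = Bᴴ * B := posSemidefSqrt_mul_self' hσp
  have hRh : Rᴴ = R := posSemidefSqrt_herm' hρp
  have hSh : Sᴴ = S := posSemidefSqrt_herm' hσp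
  have step1 : traceNorm (A * Bᴴ) = traceNorm (R * Bᴴ) := by
    apply traceNorm_ext
    intro k _
    have e : (A * Bᴴ)ᴴ * (A * Bᴴ) = (R * Bᴴ)ᴴ * (R * Bᴴ) := by
      rw [conjTranspose_mul, conjTranspose_mul, conjTranspose_conjTranspose, hRh,
        Matrix.mul_assoc, Matrix.mul_assoc, ← Matrix.mul_assoc Aᴴ A Bᴴ,
        ← Matrix.mul_assoc R R Bᴴ, hR]
    rw [e]
  have step2 : traceNorm (R * Bᴴ) = traceNorm (B * R) := by
    apply traceNorm_ext
    intro k hk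
    have e : B * R = (R * Bᴴ)ᴴ := by
      rw [conjTranspose_mul, conjTranspose_conjTranspose, hRh]
    rw [e, conjTranspose_conjTranspose]
    exact trace_pow_conj_swap (R * Bᴴ) k hk
  have step3 : traceNorm (B * R) = traceNorm (S * R) := by
    apply traceNorm_ext
    intro k _
    have e : (B * R)ᴴ * (B * R) = (S * R)ᴴ * (S * R) := by
      rw [conjTranspose_mul, conjTranspose_mul, hRh, hSh,
        Matrix.mul_assoc, Matrix.mul_assoc, ← Matrix.mul_assoc Bᴴ B R,
        ← Matrix.mul_assoc S S R, hS]
    rw [e]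
  have step4 : traceNorm (S * R) = traceNorm (R * S) := by
    apply traceNorm_ext
    intro k hk
    have e : R * S = (S * R)ᴴ := by
      rw [conjTranspose_mul, hRh, hSh]
    rw [e, conjTranspose_conjTranspose]
    exact trace_pow_conj_swap (S * R) k hk
  rw [step1, step2, step3, step4]
end
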